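/- Let X be a locally compact Hausdorff space. The map φ: CL(X) → E(Γ(X)) given by φ(K) = id_{X\K} is an isomorphism of semilattices which is a homeomorphism from the Fell topology on CL(X) to the topology τ_hco restricted to E(Γ(X)); consequently E(Γ(X)) is compact in τ_hco. -/

import Mathlib

set_option linter.unusedTactic false

/-- A partial homeomorphism of `X`: a homeomorphism between open subsets
`dom` and `im` of `X`, normalized to be the identity outside its domain
(so that equality of `PGamma`s corresponds to equality of partial maps). -/
structure PGamma (X : Type*) [TopologicalSpace X] where
  dom : Set X
  im : Set X
  toFun : X → X
  invFun : X → X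
  domOpen : IsOpen dom
  imOpen : IsOpen im
  mapsTo : Set.MapsTo toFun dom im
  invMapsTo : Set.MapsTo invFun im dom
  leftInv : ∀ x ∈ dom, invFun (toFun x) = x
  rightInv : ∀ y ∈ im, toFun (invFun y) = y
  contOn : ContinuousOn toFun dom
  invContOn : ContinuousOn invFun im
  toFun_id : ∀ x, x ∉ dom → toFun x = x
  invFun_id : ∀ y, y ∉ im → invFun y = y

namespace PGamma

variable {X : Type*} [TopologicalSpace X]

open Classical in
/-- Composition of partial homeomorphisms (`comp f g = f ∘ g` on the largest
domain where it makes sense). -/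
noncomputable def comp (f g : PGamma X) : PGamma X where
  dom := g.dom ∩ g.toFun ⁻¹' f.dom
  im := f.im ∩ f.invFun ⁻¹' g.im
  toFun := fun x => if x ∈ g.dom ∩ g.toFun ⁻¹' f.dom then f.toFun (g.toFun x) else x
  invFun := fun y => if y ∈ f.im ∩ f.invFun ⁻¹' g.im then g.invFun (f.invFun y) else y
  domOpen := g.contOn.isOpen_inter_preimage g.domOpen f.domOpen
  imOpen := f.invContOn.isOpen_inter_preimage f.imOpen g.imOpen
  mapsTo := fun x hx => by
    beta_reduce
    rw [if_pos hx]
    exact ⟨f.mapsTo hx.2, by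
      simp only [Set.mem_preimage]
      rw [f.leftInv _ hx.2]; exact g.mapsTo hx.1⟩
  invMapsTo := fun y hy => by
    beta_reduce
    rw [if_pos hy]
    exact ⟨g.invMapsTo hy.2, by
      simp only [Set.mem_preimage]
      rw [g.rightInv _ hy.2]; exact f.invMapsTo hy.1⟩
  leftInv := fun x hx => by
    beta_reduce
    rw [if_pos hx]
    beta_reduce
    rw [if_pos]
    · rw [f.leftInv _ hx.2]; exact g.leftInv _ hx.1
    · exact ⟨f.mapsTo hx.2, by
        simp only [Set.mem_preimage]
        rw [f.leftInv _ hx.2]; exact g.mapsTo hx.1⟩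
  rightInv := fun y hy => by
    beta_reduce
    rw [if_pos hy]
    beta_reduce
    rw [if_pos]
    · rw [g.rightInv _ hy.2]; exact f.rightInv _ hy.1
    · exact ⟨g.invMapsTo hy.2, by
        simp only [Set.mem_preimage]
        rw [g.rightInv _ hy.2]; exact f.invMapsTo hy.1⟩
  contOn := by
    have h1 : ContinuousOn (fun x => f.toFun (g.toFun x)) (g.dom ∩ g.toFun ⁻¹' f.dom) :=
      f.contOn.comp (g.contOn.mono Set.inter_subset_left) (fun x hx => hx.2)
    exact h1.congr (fun x hx => if_pos hx)
  invContOn := by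
    have h1 : ContinuousOn (fun y => g.invFun (f.invFun y)) (f.im ∩ f.invFun ⁻¹' g.im) :=
      g.invContOn.comp (f.invContOn.mono Set.inter_subset_left) (fun y hy => hy.2)
    exact h1.congr (fun y hy => if_pos hy)
  toFun_id := fun x hx => if_neg hx
  invFun_id := fun y hy => if_neg hy
/-- The inverse of a partial homeomorphism. -/
def inv (f : PGamma X) : PGamma X where
  dom := f.im
  im := f.dom
  toFun := f.invFun
  invFun := f.toFun
  domOpen := f.imOpen
  imOpen := f.domOpen
  mapsTo := f.invMapsTo
  invMapsTo := f.mapsTo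
  leftInv := f.rightInv
  rightInv := f.leftInv
  contOn := f.invContOn
  invContOn := f.contOn
  toFun_id := f.invFun_id
  invFun_id := f.toFun_id

/-- The identity on an open set `V`, an idempotent of `Γ(X)`. -/
def idOn (V : Set X) (hV : IsOpen V) : PGamma X where
  dom := V
  im := V
  toFun := id
  invFun := id
  domOpen := hV
  imOpen := hV
  mapsTo := fun _ hx => hx
  invMapsTo := fun _ hx => hx
  leftInv := fun _ _ => rfl
  rightInv := fun _ _ => rfl
  contOn := continuous_id.continuousOn
  invContOn := continuous_id.continuousOn
  toFun_id := fun _ _ => rfl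
  invFun_id := fun _ _ => rfl

end PGamma

/-- The closed subsets of `X`. -/
abbrev Cl (X : Type*) [TopologicalSpace X] := {A : Set X // IsClosed A}

/-- The Fell topology on the closed subsets of `X`: subbasic sets are
`V⁻ = {A : A ∩ V ≠ ∅}` for `V` open, and `W⁺ = {A : A ⊆ W}` for `W` open
with compact complement. -/
instance fellTop (X : Type*) [TopologicalSpace X] : TopologicalSpace (Cl X) :=
  .generateFrom ({s | ∃ V : Set X, IsOpen V ∧ s = {A : Cl X | (A.1 ∩ V).Nonempty}} ∪
    {s | ∃ W : Set X, IsOpen W ∧ IsCompact Wᶜ ∧ s = {A : Cl X | A.1 ⊆ W}})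

variable {X : Type*} [TopologicalSpace X]

/-- `D(f) = X \ dom f`. -/
def Dmap (f : PGamma X) : Cl X := ⟨f.domᶜ, f.domOpen.isClosed_compl⟩

/-- `I(f) = X \ im f`. -/
def Imap (f : PGamma X) : Cl X := ⟨f.imᶜ, f.imOpen.isClosed_compl⟩

/-- The subbasic set `⟨K;V⟩ = {f ∈ Γ(X) : K ⊆ dom f, f(K) ⊆ V}`. -/
def gBasic (K V : Set X) : Set (PGamma X) :=
  {f | K ⊆ f.dom ∧ f.toFun '' K ⊆ V}

/-- The subbasis of the topology `τ_ico`: the sets `⟨K;V⟩` and `⟨K;V⟩⁻¹`,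
for `K` compact and `V` open. -/
def icoSubbasis (X : Type*) [TopologicalSpace X] : Set (Set (PGamma X)) :=
  {s | ∃ K V : Set X, IsCompact K ∧ IsOpen V ∧
    (s = gBasic K V ∨ s = PGamma.inv ⁻¹' gBasic K V)}

/-- The topology `τ_ico` on `Γ(X)`. -/
def icoTop (X : Type*) [TopologicalSpace X] : TopologicalSpace (PGamma X) :=
  .generateFrom (icoSubbasis X)

/-- The topology `τ_hco` on `Γ(X)`: generated by `τ_ico` together with the
preimages of Fell-open sets under `D : f ↦ X \ dom f` and `I : f ↦ X \ im f`. -/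
def thcoTop (X : Type*) [TopologicalSpace X] : TopologicalSpace (PGamma X) :=
  .generateFrom (icoSubbasis X ∪
    {s | ∃ u : Set (Cl X), IsOpen u ∧ (s = Dmap ⁻¹' u ∨ s = Imap ⁻¹' u)})

/-- The map `φ : CL(X) → E(Γ(X))`, `φ(K) = id_{X \ K}`. -/
def phiId {X : Type*} [TopologicalSpace X] (A : Cl X) : PGamma X :=
  PGamma.idOn A.1ᶜ A.2.isOpen_compl

section Aux

open Filter Topology

variable {X : Type*} [TopologicalSpace X]

open Classical in
lemma PGamma.comp_toFun (f g : PGamma X) (x : X) :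
    (f.comp g).toFun x =
      if x ∈ g.dom ∩ g.toFun ⁻¹' f.dom then f.toFun (g.toFun x) else x := rfl

open Classical in
lemma PGamma.comp_invFun (f g : PGamma X) (y : X) :
    (f.comp g).invFun y =
      if y ∈ f.im ∩ f.invFun ⁻¹' g.im then g.invFun (f.invFun y) else y := rfl

lemma PGamma.ext' {f g : PGamma X} (h1 : f.dom = g.dom) (h2 : f.im = g.im)
    (h3 : f.toFun = g.toFun) (h4 : f.invFun = g.invFun) : f = g := by
  cases f; cases g; simp_all

lemma phiId_inv (A : Cl X) : (phiId A).inv = phiId A := rfl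

lemma Dmap_phiId (A : Cl X) : Dmap (phiId A) = A := Subtype.ext (compl_compl _)

lemma Imap_phiId (A : Cl X) : Imap (phiId A) = A := Subtype.ext (compl_compl _)

lemma phiId_union (A B : Cl X) :
    phiId (⟨A.1 ∪ B.1, A.2.union B.2⟩ : Cl X) = (phiId A).comp (phiId B) := by
  refine PGamma.ext' ?_ ?_ ?_ ?_
  · show (A.1 ∪ B.1)ᶜ = B.1ᶜ ∩ (id ⁻¹' A.1ᶜ)
    rw [Set.compl_union, Set.preimage_id, Set.inter_comm]
  · show (A.1 ∪ B.1)ᶜ = A.1ᶜ ∩ (id ⁻¹' B.1ᶜ)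
    rw [Set.compl_union, Set.preimage_id]
  · funext x
    rw [PGamma.comp_toFun]
    split <;> rfl
  · funext x
    rw [PGamma.comp_invFun]
    split <;> rfl

lemma phiId_injective : Function.Injective (phiId (X := X)) := by
  intro A B h
  have : A.1ᶜ = B.1ᶜ := congrArg PGamma.dom h
  exact Subtype.ext (by simpa using congrArg compl this)

lemma phiId_range : Set.range (phiId (X := X)) = {f : PGamma X | f.comp f = f} := by
  ext f
  constructor
  · rintro ⟨A, rfl⟩
    show (phiId A).comp (phiId A) = phiId A
    rw [← phiId_union]
    congr 1
    exact Subtype.ext (Set.union_self _)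
  · intro h
    have hdom : f.dom ∩ f.toFun ⁻¹' f.dom = f.dom := congrArg PGamma.dom h
    have him : f.im ∩ f.invFun ⁻¹' f.im = f.im := congrArg PGamma.im h
    have htf := congrArg PGamma.toFun h
    have hmem : ∀ x ∈ f.dom, x ∈ f.dom ∩ f.toFun ⁻¹' f.dom := fun x hx => by
      rw [hdom]; exact hx
    have hfix : ∀ x ∈ f.dom, f.toFun x = x := by
      intro x hx
      have h1 : f.toFun (f.toFun x) = f.toFun x := by
        have := congrFun htf x
        rwa [PGamma.comp_toFun, if_pos (hmem x hx)] at this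
      have h2 : f.toFun x ∈ f.dom := (hmem x hx).2
      have := f.leftInv _ h2
      rw [h1, f.leftInv _ hx] at this
      exact this.symm
    have hinvfix : ∀ y ∈ f.im, f.invFun y = y := by
      intro y hy
      have h2 : f.invFun y ∈ f.dom := f.invMapsTo hy
      have := f.rightInv _ hy
      rw [hfix _ h2] at this
      exact this
    have hdi : f.dom = f.im := by
      apply Set.Subset.antisymm
      · intro x hx; have := f.mapsTo hx; rwa [hfix _ hx] at this
      · intro y hy; have := f.invMapsTo hy; rwa [hinvfix _ hy] at this
    refine ⟨⟨f.domᶜ, f.domOpen.isClosed_compl⟩, ?_⟩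
    refine (PGamma.ext' ?_ ?_ ?_ ?_).symm
    · exact (compl_compl _).symm
    · rw [← hdi]; exact (compl_compl _).symm
    · funext x
      by_cases hx : x ∈ f.dom
      · exact hfix x hx
      · exact f.toFun_id x hx
    · funext y
      by_cases hy : y ∈ f.im
      · exact hinvfix y hy
      · exact f.invFun_id y hy

/-- The Fell topology is compact. -/
lemma fell_compact : IsCompact (Set.univ : Set (Cl X)) := by
  rw [isCompact_iff_ultrafilter_le_nhds]
  intro F _
  classical
  set S : Set X → Set (Cl X) := fun U => {B : Cl X | (B.1 ∩ U).Nonempty} with hS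
  set 𝒰 : Set (Set X) := {U | IsOpen U ∧ S U ∉ F} with h𝒰
  set A : Set X := (⋃₀ 𝒰)ᶜ with hA
  have hAclosed : IsClosed A := (isOpen_sUnion (fun U hU => hU.1)).isClosed_compl
  refine ⟨⟨A, hAclosed⟩, Set.mem_univ _, ?_⟩
  have hn : (𝓝 (⟨A, hAclosed⟩ : Cl X)) =
      ⨅ s ∈ {s | (⟨A, hAclosed⟩ : Cl X) ∈ s ∧ s ∈
        ({s | ∃ V : Set X, IsOpen V ∧ s = {B : Cl X | (B.1 ∩ V).Nonempty}} ∪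
         {s | ∃ W : Set X, IsOpen W ∧ IsCompact Wᶜ ∧ s = {B : Cl X | B.1 ⊆ W}})}, 𝓟 s :=
    TopologicalSpace.nhds_generateFrom
  rw [hn, le_iInf₂_iff]
  rintro s ⟨hAs, hs | hs⟩
  · obtain ⟨V, hV, rfl⟩ := hs
    rw [Filter.le_principal_iff]
    obtain ⟨x, hxA, hxV⟩ := hAs
    by_contra hSV
    exact hxA ⟨V, ⟨hV, hSV⟩, hxV⟩
  · obtain ⟨W, hW, hWc, rfl⟩ := hs
    rw [Filter.le_principal_iff]
    have cover : Wᶜ ⊆ ⋃ (U : 𝒰), (U : Set X) := by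
      intro x hx
      have hxA : x ∉ A := fun h => hx (hAs h)
      obtain ⟨U, hU, hxU⟩ := not_not.mp (fun h => hxA h)
      exact Set.mem_iUnion.2 ⟨⟨U, hU⟩, hxU⟩
    obtain ⟨t, ht⟩ := hWc.elim_finite_subcover (fun U : 𝒰 => (U : Set X))
      (fun U => U.2.1) cover
    have hT : (⋂ U ∈ t, {B : Cl X | B.1 ∩ (U : Set X) = ∅}) ∈ F :=
      (Filter.biInter_finset_mem t).2 (fun U _ => by
        have h1 : (S (U : Set X))ᶜ ∈ (F : Filter (Cl X)) := Ultrafilter.compl_mem_iff_notMem.2 U.2.2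
        convert h1 using 1
        ext B
        simp [hS, Set.not_nonempty_iff_eq_empty])
    refine Filter.mem_of_superset hT ?_
    intro B hB x hxB
    by_contra hxW
    obtain ⟨U, hUt, hxU⟩ := Set.mem_iUnion₂.1 (ht hxW)
    have := Set.mem_iInter₂.1 hB U hUt
    exact absurd this (Set.nonempty_iff_ne_empty.1 ⟨x, hxB, hxU⟩)

lemma isOpen_preimage_gBasic [T2Space X] (K V : Set X) (hK : IsCompact K) :
    IsOpen (phiId (X := X) ⁻¹' gBasic K V) := by
  by_cases h : K ⊆ V
  · have heq : phiId (X := X) ⁻¹' gBasic K V = {A : Cl X | A.1 ⊆ Kᶜ} := by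
      ext A
      simp only [Set.mem_preimage, gBasic, Set.mem_setOf_eq, phiId, PGamma.idOn,
        Set.image_id]
      exact ⟨fun ⟨h1, _⟩ => Set.subset_compl_comm.1 h1,
        fun h1 => ⟨Set.subset_compl_comm.1 h1, h⟩⟩
    rw [heq]
    exact TopologicalSpace.isOpen_generateFrom_of_mem
      (Or.inr ⟨Kᶜ, hK.isClosed.isOpen_compl, by rw [compl_compl]; exact hK, rfl⟩)
  · have heq : phiId (X := X) ⁻¹' gBasic K V = ∅ := by
      ext A
      simp only [Set.mem_preimage, gBasic, Set.mem_setOf_eq, phiId, PGamma.idOn,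
        Set.image_id, Set.mem_empty_iff_false, iff_false]
      exact fun ⟨_, h2⟩ => h h2
    rw [heq]; exact isOpen_empty

lemma phiId_continuous [T2Space X] :
    Continuous[fellTop X, thcoTop X] (phiId (X := X)) := by
  rw [show thcoTop X = TopologicalSpace.generateFrom _ from rfl,
    continuous_generateFrom_iff]
  rintro s (⟨K, V, hK, hV, hs | hs⟩ | ⟨u, hu, hs | hs⟩)
  · subst hs
    exact isOpen_preimage_gBasic K V hK
  · subst hs
    have heq : phiId ⁻¹' (PGamma.inv ⁻¹' gBasic K V) = phiId ⁻¹' gBasic K V := by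
      ext A; simp [Set.mem_preimage, phiId_inv]
    rw [Set.preimage_preimage] at heq ⊢
    rw [heq]
    exact isOpen_preimage_gBasic K V hK
  · subst hs
    have : phiId ⁻¹' (Dmap ⁻¹' u) = u := by
      ext A; simp [Set.mem_preimage, Dmap_phiId]
    rw [this]; exact hu
  · subst hs
    have : phiId ⁻¹' (Imap ⁻¹' u) = u := by
      ext A; simp [Set.mem_preimage, Imap_phiId]
    rw [this]; exact hu

lemma Dmap_continuous : Continuous[thcoTop X, fellTop X] (Dmap (X := X)) := by
  rw [continuous_def]
  intro u hu
  exact TopologicalSpace.isOpen_generateFrom_of_mem (Or.inr ⟨u, hu, Or.inl rfl⟩)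

end Aux

/-- for `X` locally compact Hausdorff, `φ(K) = id_{X\K}` is a
semilattice isomorphism from `(CL(X), ∪)` onto the idempotents of `Γ(X)` which
is a homeomorphism from the Fell topology onto `E(Γ(X))` with the topology
`τ_hco`; consequently `E(Γ(X))` is `τ_hco`-compact. -/
theorem stmt14 {X : Type*} [TopologicalSpace X] [T2Space X] [LocallyCompactSpace X] :
    (∀ A B : Cl X, phiId (⟨A.1 ∪ B.1, A.2.union B.2⟩ : Cl X) =
      (phiId A).comp (phiId B)) ∧
    Function.Injective (phiId (X := X)) ∧
    Set.range (phiId (X := X)) = {f : PGamma X | f.comp f = f} ∧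
    @Topology.IsEmbedding (Cl X) (PGamma X) (fellTop X) (thcoTop X) phiId ∧
    @IsCompact (PGamma X) (thcoTop X) {f : PGamma X | f.comp f = f} := by
  refine ⟨phiId_union, phiId_injective, phiId_range, ?_, ?_⟩
  · letI : TopologicalSpace (PGamma X) := thcoTop X
    have hid : Topology.IsInducing (Dmap ∘ phiId (X := X)) := by
      have h : Dmap ∘ phiId = (id : Cl X → Cl X) := funext Dmap_phiId
      rw [h]
      exact Topology.IsInducing.id
    exact ⟨Topology.IsInducing.of_comp phiId_continuous Dmap_continuous hid, phiId_injective⟩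
  · letI : TopologicalSpace (PGamma X) := thcoTop X
    rw [← phiId_range, ← Set.image_univ]
    exact fell_compact.image phiId_continuous
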